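/- The lattice of implicative filters of a Hilbert algebra, ordered by inclusion, is a distributive lattice (with meet given by intersection). -/

import Mathlib

structure HilbertAlgebra (A : Type*) where
  imp : A → A → A
  one : A
  one_eq : ∀ a : A, imp a a = one
  K : ∀ a b : A, imp a (imp b a) = one
  S : ∀ a b c : A, imp (imp a (imp b c)) (imp (imp a b) (imp a c)) = one
  antisymm : ∀ a b : A, imp a b = one → imp b a = one → a = b

namespace HilbertAlgebra

variable {A : Type*} (H : HilbertAlgebra A)

/-- The order of a Hilbert algebra: `a ≤ b` iff `a → b = 1`. -/
def le (a b : A) : Prop := H.imp a b = H.one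

/-- Implicative filters: contain `1` and are closed under modus ponens. -/
def IsFilter (F : Set A) : Prop :=
  H.one ∈ F ∧ ∀ a b : A, a ∈ F → H.imp a b ∈ F → b ∈ F

/-- The implicative filter generated by a set `X`. -/
def Fg (X : Set A) : Set A := ⋂₀ {F : Set A | H.IsFilter F ∧ X ⊆ F}

/-- Meet irreducible implicative filters. -/
def MeetIrred (F : Set A) : Prop :=
  H.IsFilter F ∧ F ≠ Set.univ ∧
    ∀ G K : Set A, H.IsFilter G → H.IsFilter K → F ⊂ G → F ⊂ K → F ≠ G ∩ K

/-- The terms `dₙ`. -/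
def d : (n : ℕ) → (Fin (n + 1) → A) → A
  | 0, x => x 0
  | n + 1, x =>
    H.imp
      (H.imp (H.imp (x (Fin.last (n + 1))) (d n fun i => x i.castSucc))
        (x (Fin.last (n + 1))))
      (x (Fin.last (n + 1)))

end HilbertAlgebra

section Aux

variable {A : Type*} (H : HilbertAlgebra A)

lemma HA.imp_one (a : A) : H.imp a H.one = H.one := by
  have h := H.K a a; rwa [H.one_eq a] at h

lemma HA.mp {a b : A} (ha : a = H.one) (hab : H.imp a b = H.one) : b = H.one := by
  subst ha
  exact (H.antisymm _ _ hab (HA.imp_one H b)).symm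

lemma HA.s_rule {a b c : A} (h : H.imp a (H.imp b c) = H.one) :
    H.imp (H.imp a b) (H.imp a c) = H.one :=
  HA.mp H h (H.S a b c)

lemma HA.imp_of {b : A} (hb : b = H.one) (a : A) : H.imp a b = H.one :=
  HA.mp H hb (H.K b a)

lemma HA.brule {p q : A} (h : H.imp p q = H.one) (x : A) :
    H.imp (H.imp x p) (H.imp x q) = H.one :=
  HA.s_rule H (HA.imp_of H h x)

lemma HA.trans {p q r : A} (hpq : H.imp p q = H.one) (hqr : H.imp q r = H.one) :
    H.imp p r = H.one :=
  HA.mp H hpq (HA.brule H hqr p)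

lemma HA.flipr {a b c : A} (h : H.imp a (H.imp b c) = H.one) :
    H.imp b (H.imp a c) = H.one :=
  HA.trans H (H.K b a) (HA.s_rule H h)

lemma HA.assertion (p q : A) : H.imp p (H.imp (H.imp p q) q) = H.one :=
  HA.flipr H (H.one_eq (H.imp p q))

lemma HA.precomp {p q : A} (h : H.imp p q = H.one) (r : A) :
    H.imp (H.imp q r) (H.imp p r) = H.one :=
  HA.flipr H (HA.trans H h (HA.assertion H q r))

lemma HA.flipt (a b c : A) :
    H.imp (H.imp a (H.imp b c)) (H.imp b (H.imp a c)) = H.one :=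
  HA.trans H (H.S a b c) (HA.precomp H (H.K b a) (H.imp a c))

/-- context entailment: `foldr imp a l = 1`. -/
lemma HA.thm_ctx {b : A} (hb : b = H.one) (l : List A) :
    l.foldr H.imp b = H.one := by
  induction l with
  | nil => exact hb
  | cons x l ih => exact HA.imp_of H ih x

lemma HA.mono_ctx {p q : A} (h : H.imp p q = H.one) (l : List A) :
    H.imp (l.foldr H.imp p) (l.foldr H.imp q) = H.one := by
  induction l with
  | nil => exact h
  | cons x l ih => exact HA.brule H ih x

lemma HA.intro_ctx (c : A) (m : List A) :
    H.imp c (m.foldr H.imp c) = H.one := by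
  induction m with
  | nil => exact H.one_eq c
  | cons x m ih => exact HA.trans H ih (H.K (m.foldr H.imp c) x)

lemma HA.ctx_S (a b : A) (l : List A) :
    H.imp (l.foldr H.imp (H.imp a b))
      (H.imp (l.foldr H.imp a) (l.foldr H.imp b)) = H.one := by
  induction l with
  | nil => exact H.one_eq _
  | cons x l ih =>
    exact HA.trans H (HA.brule H ih x) (H.S x (l.foldr H.imp a) (l.foldr H.imp b))

lemma HA.ctx_mp {a b : A} {l : List A} (ha : l.foldr H.imp a = H.one)
    (hab : l.foldr H.imp (H.imp a b) = H.one) : l.foldr H.imp b = H.one :=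
  HA.mp H ha (HA.mp H hab (HA.ctx_S H a b l))

lemma HA.dneg_ctx (a : A) (m : List A) (x : A) :
    H.imp (H.imp x (m.foldr H.imp a))
      (H.imp (H.imp (H.imp x a) a) (m.foldr H.imp a)) = H.one := by
  induction m with
  | nil => exact HA.assertion H (H.imp x a) a
  | cons c m ih =>
    refine HA.trans H (HA.flipt H x c (m.foldr H.imp a)) ?_
    refine HA.trans H (HA.brule H ih c) ?_
    exact HA.flipt H c (H.imp (H.imp x a) a) (m.foldr H.imp a)

lemma HA.subst_lemma (a : A) (l : List A) :
    H.imp (l.foldr H.imp a)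
      ((l.map fun x => H.imp (H.imp x a) a).foldr H.imp a) = H.one := by
  induction l with
  | nil => exact H.one_eq a
  | cons x l ih =>
    refine HA.trans H (HA.brule H ih x) ?_
    exact HA.dneg_ctx H a (l.map fun x => H.imp (H.imp x a) a) x

lemma HA.deduce {F : Set A} (hF : H.IsFilter F) {l : List A}
    (hl : ∀ x ∈ l, x ∈ F) {a : A} (h : l.foldr H.imp a ∈ F) : a ∈ F := by
  induction l generalizing a with
  | nil => exact h
  | cons x l ih =>
    exact ih (fun y hy => hl y (List.mem_cons_of_mem x hy))
      (hF.2 x _ (hl x List.mem_cons_self) h)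

/-- derivable elements from X -/
def HA.Der (X : Set A) : Set A :=
  {a | ∃ l : List A, (∀ x ∈ l, x ∈ X) ∧ l.foldr H.imp a = H.one}

lemma HA.der_filter (X : Set A) : H.IsFilter (HA.Der H X) := by
  constructor
  · exact ⟨[], by simp, rfl⟩
  · rintro a b ⟨l, hl, hl1⟩ ⟨m, hm, hm1⟩
    refine ⟨m ++ l, ?_, ?_⟩
    · intro x hx; rcases List.mem_append.1 hx with h | h
      · exact hm x h
      · exact hl x h
    · have ha : (m ++ l).foldr H.imp a = H.one := by
        rw [List.foldr_append, hl1]; exact HA.thm_ctx H rfl m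
      have hab : (m ++ l).foldr H.imp (H.imp a b) = H.one := by
        rw [List.foldr_append]
        exact HA.mp H hm1 (HA.mono_ctx H (HA.intro_ctx H (H.imp a b) l) m)
      exact HA.ctx_mp H ha hab

lemma HA.subset_der (X : Set A) : X ⊆ HA.Der H X := by
  intro x hx
  exact ⟨[x], by simpa using hx, by simpa using H.one_eq x⟩

lemma HA.Fg_subset {X F : Set A} (hF : H.IsFilter F) (hX : X ⊆ F) :
    H.Fg X ⊆ F :=
  Set.sInter_subset_of_mem ⟨hF, hX⟩

lemma HA.subset_Fg (X : Set A) : X ⊆ H.Fg X := by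
  intro x hx
  exact fun F hF => hF.2 hx

lemma HA.Fg_filter (X : Set A) : H.IsFilter (H.Fg X) := by
  constructor
  · exact fun F hF => hF.1.1
  · intro a b ha hab F hF
    exact hF.1.2 a b (ha F hF) (hab F hF)

end Aux

/-- The lattice of implicative filters (meet = intersection, join = generated
filter of the union) is distributive. -/
theorem hilbert_filters_distributive {A : Type*} (H : HilbertAlgebra A)
    (F G K : Set A) (hF : H.IsFilter F) (hG : H.IsFilter G) (hK : H.IsFilter K) :
    F ∩ H.Fg (G ∪ K) = H.Fg ((F ∩ G) ∪ (F ∩ K)) := by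
  apply Set.Subset.antisymm
  · rintro a ⟨haF, haFg⟩
    -- get a derivation from G ∪ K
    have : a ∈ HA.Der H (G ∪ K) :=
      HA.Fg_subset H (HA.der_filter H (G ∪ K)) (HA.subset_der H (G ∪ K)) haFg
    obtain ⟨l, hl, hl1⟩ := this
    intro M hM
    obtain ⟨hMf, hMs⟩ := hM
    refine HA.deduce H hMf (l := l.map fun x => H.imp (H.imp x a) a) ?_ ?_
    · intro y hy
      obtain ⟨x, hx, rfl⟩ := List.mem_map.1 hy
      have hyF : H.imp (H.imp x a) a ∈ F := by
        refine hF.2 a _ haF ?_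
        rw [H.K a (H.imp x a)]; exact hF.1
      rcases hl x hx with hxG | hxK
      · refine hMs (Or.inl ⟨hyF, ?_⟩)
        refine hG.2 x _ hxG ?_
        rw [HA.assertion H x a]; exact hG.1
      · refine hMs (Or.inr ⟨hyF, ?_⟩)
        refine hK.2 x _ hxK ?_
        rw [HA.assertion H x a]; exact hK.1
    · have : (l.map fun x => H.imp (H.imp x a) a).foldr H.imp a = H.one :=
        HA.mp H hl1 (HA.subst_lemma H a l)
      rw [this]; exact hMf.1
  · intro a ha
    constructor
    · exact HA.Fg_subset H hF (by
        rintro x (⟨h1, _⟩ | ⟨h1, _⟩) <;> exact h1) ha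
    · refine HA.Fg_subset H (HA.Fg_filter H (G ∪ K)) ?_ ha
      rintro x (⟨_, h2⟩ | ⟨_, h2⟩)
      · exact HA.subset_Fg H (G ∪ K) (Or.inl h2)
      · exact HA.subset_Fg H (G ∪ K) (Or.inr h2)
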